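/- Let $G$ be a graph on $n$ vertices with $m$ edges and first Zagreb index $Z_1$, and let $0 \le \alpha < 1$. Then $E_{A_\alpha}(G) \ge \sqrt{2\alpha^2 Z_1 + 4(1-\alpha)^2 m - \frac{8\alpha^2 m^2}{n}}$. -/

import Mathlib

open Finset

lemma aux_sum_eig {n : Type*} [Fintype n] [DecidableEq n] {A : Matrix n n ℝ}
    (hA : A.IsHermitian) : ∑ i, hA.eigenvalues i = A.trace := by
  conv_rhs => rw [hA.spectral_theorem]
  rw [Unitary.conjStarAlgAut_apply, Matrix.trace_mul_cycle, Unitary.coe_star_mul_self, Matrix.one_mul, Matrix.trace_diagonal]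
  simp

lemma aux_sum_sq_eig {n : Type*} [Fintype n] [DecidableEq n] {A : Matrix n n ℝ}
    (hA : A.IsHermitian) : ∑ i, hA.eigenvalues i ^ 2 = (A * A).trace := by
  set U : Matrix n n ℝ := ↑hA.eigenvectorUnitary with hUdef
  have hU : U * star U = 1 := Unitary.coe_mul_star_self _
  have h1 : star U * (A * A) * U
      = Matrix.diagonal (RCLike.ofReal ∘ hA.eigenvalues)
        * Matrix.diagonal (RCLike.ofReal ∘ hA.eigenvalues) := by
    have hSU : star U * U = 1 := Unitary.coe_star_mul_self _
    have hSU' : ∀ X : Matrix n n ℝ, star U * (U * X) = X := fun X => by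
      rw [← Matrix.mul_assoc, hSU, Matrix.one_mul]
    conv_lhs => rw [hA.spectral_theorem, Unitary.conjStarAlgAut_apply]
    simp only [Unitary.coe_star, ← hUdef, Matrix.mul_assoc, hSU', hSU, Matrix.mul_one]
  have h2 : (A * A).trace = (star U * (A * A) * U).trace := by
    rw [Matrix.trace_mul_cycle, ← Matrix.mul_assoc, hU, Matrix.one_mul]
  rw [h2, h1, Matrix.diagonal_mul_diagonal, Matrix.trace_diagonal]
  simp [sq]

lemma aux_deg_sum {V : Type*} [Fintype V] (G : SimpleGraph V) [DecidableRel G.Adj] :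
    (∑ v, (G.degree v : ℝ)) = 2 * (G.edgeFinset.card : ℝ) := by
  have := G.sum_degrees_eq_twice_card_edges
  exact_mod_cast congrArg (Nat.cast : ℕ → ℝ) this

lemma aux_trace_M {V : Type*} [Fintype V] [DecidableEq V] (G : SimpleGraph V)
    [DecidableRel G.Adj] (α : ℝ) :
    (α • Matrix.diagonal (fun v => (G.degree v : ℝ)) + (1 - α) • G.adjMatrix ℝ).trace
      = 2 * α * (G.edgeFinset.card : ℝ) := by
  rw [Matrix.trace_add, Matrix.trace_smul, Matrix.trace_smul, Matrix.trace_diagonal,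
    SimpleGraph.trace_adjMatrix, aux_deg_sum]
  simp only [smul_eq_mul, smul_zero, add_zero]
  ring

lemma aux_trace_M_sq {V : Type*} [Fintype V] [DecidableEq V] (G : SimpleGraph V)
    [DecidableRel G.Adj] (α : ℝ) :
    ((α • Matrix.diagonal (fun v => (G.degree v : ℝ)) + (1 - α) • G.adjMatrix ℝ)
      * (α • Matrix.diagonal (fun v => (G.degree v : ℝ)) + (1 - α) • G.adjMatrix ℝ)).trace
      = α ^ 2 * (∑ v, (G.degree v : ℝ) ^ 2) + 2 * (1 - α) ^ 2 * (G.edgeFinset.card : ℝ) := by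
  set D := Matrix.diagonal (fun v => (G.degree v : ℝ)) with hD
  set A := G.adjMatrix ℝ with hA
  have hDD : (D * D).trace = ∑ v, (G.degree v : ℝ) ^ 2 := by
    simp [hD, Matrix.diagonal_mul_diagonal, Matrix.trace_diagonal, sq]
  have hDA : (D * A).trace = 0 := by
    rw [Matrix.trace]
    apply Finset.sum_eq_zero
    intro v _
    simp only [hD, hA, Matrix.diag, Matrix.diagonal_mul, Matrix.mul_apply,
      SimpleGraph.adjMatrix_apply]
    apply Finset.sum_eq_zero
    intro u _
    rcases eq_or_ne v u with rfl | hne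
    · simp
    · simp [Matrix.diagonal_apply, hne, hne.symm]
  have hAD : (A * D).trace = 0 := by
    rw [Matrix.trace]
    apply Finset.sum_eq_zero
    intro v _
    simp only [hD, hA, Matrix.diag, Matrix.mul_apply, SimpleGraph.adjMatrix_apply,
      Matrix.diagonal_apply]
    apply Finset.sum_eq_zero
    intro u _
    rcases eq_or_ne v u with rfl | hne
    · simp
    · simp [Matrix.diagonal_apply, hne, hne.symm]
  have hAA : (A * A).trace = 2 * (G.edgeFinset.card : ℝ) := by
    have h : ∀ v, (A * A) v v = (G.degree v : ℝ) := fun v => G.adjMatrix_mul_self_apply_self v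
    rw [Matrix.trace]
    simp only [Matrix.diag, h]
    exact aux_deg_sum G
  rw [add_mul, mul_add, mul_add, Matrix.smul_mul, Matrix.smul_mul, Matrix.smul_mul,
    Matrix.smul_mul, Matrix.mul_smul, Matrix.mul_smul, Matrix.mul_smul, Matrix.mul_smul]
  rw [Matrix.trace_add, Matrix.trace_add, Matrix.trace_add]
  simp only [Matrix.trace_smul, hDD, hDA, hAD, hAA, smul_eq_mul, smul_zero]
  ring

lemma aux_abs_sum_sq {n : Type*} [Fintype n] (x : n → ℝ) (h : ∑ i, x i = 0) :
    2 * ∑ i, (x i) ^ 2 ≤ (∑ i, |x i|) ^ 2 := by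
  set P := ∑ i, max (x i) 0 with hP
  set N := ∑ i, max (-(x i)) 0 with hN
  have hPN : P = N := by
    have : P - N = 0 := by
      rw [hP, hN, ← Finset.sum_sub_distrib]
      rw [show ∑ i, (max (x i) 0 - max (-(x i)) 0) = ∑ i, x i from by
        congr 1; funext i
        rcases le_total (x i) 0 with h' | h'
        · rw [max_eq_right h', max_eq_left (by linarith)]; ring
        · rw [max_eq_left h', max_eq_right (by linarith)]; ring]
      exact h
    linarith
  have habs : ∑ i, |x i| = P + N := by
    rw [hP, hN, ← Finset.sum_add_distrib]
    congr 1; funext i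
    rcases le_total (x i) 0 with h' | h'
    · rw [abs_of_nonpos h', max_eq_right h', max_eq_left (by linarith)]; ring
    · rw [abs_of_nonneg h', max_eq_left h', max_eq_right (by linarith)]; ring
  have hsq : ∑ i, (x i) ^ 2 = (∑ i, max (x i) 0 ^ 2) + ∑ i, max (-(x i)) 0 ^ 2 := by
    rw [← Finset.sum_add_distrib]
    congr 1; funext i
    rcases le_total (x i) 0 with h' | h'
    · rw [max_eq_right h', max_eq_left (by linarith)]; ring
    · rw [max_eq_left h', max_eq_right (by linarith)]; ring
  have h1 : (∑ i, max (x i) 0 ^ 2) ≤ P ^ 2 :=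
    Finset.sum_sq_le_sq_sum_of_nonneg (fun i _ => le_max_right _ _)
  have h2 : (∑ i, max (-(x i)) 0 ^ 2) ≤ N ^ 2 :=
    Finset.sum_sq_le_sq_sum_of_nonneg (fun i _ => le_max_right _ _)
  rw [habs, hsq]
  nlinarith [sq_nonneg (P - N)]

/-- For a graph `G` on `n` vertices with `m` edges and first Zagreb index `Z₁`,
and `0 ≤ α < 1`, the `A_α`-energy satisfies
`E_{A_α}(G) ≥ √(2 α² Z₁ + 4 (1-α)² m - 8 α² m² / n)`. -/
theorem energy_Aalpha_sqrt_lower_bound {V : Type*} [Fintype V] [DecidableEq V]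
    [Nonempty V] (G : SimpleGraph V) [DecidableRel G.Adj]
    (α : ℝ) (hα0 : 0 ≤ α) (hα1 : α < 1)
    (hH : (α • Matrix.diagonal (fun v => (G.degree v : ℝ))
        + (1 - α) • G.adjMatrix ℝ).IsHermitian) :
    Real.sqrt (2 * α ^ 2 * (∑ v, (G.degree v : ℝ) ^ 2)
        + 4 * (1 - α) ^ 2 * (G.edgeFinset.card : ℝ)
        - 8 * α ^ 2 * (G.edgeFinset.card : ℝ) ^ 2 / (Fintype.card V : ℝ))
      ≤ ∑ i, |hH.eigenvalues i
          - 2 * α * (G.edgeFinset.card : ℝ) / (Fintype.card V : ℝ)| := by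
  set n : ℝ := (Fintype.card V : ℝ) with hn
  have hnpos : 0 < n := by
    rw [hn]; exact_mod_cast Fintype.card_pos
  set m : ℝ := (G.edgeFinset.card : ℝ) with hm
  set Z : ℝ := ∑ v, (G.degree v : ℝ) ^ 2 with hZ
  set c : ℝ := 2 * α * m / n with hc
  set x : V → ℝ := fun i => hH.eigenvalues i - c with hx
  have hS1 : ∑ i, hH.eigenvalues i = 2 * α * m := by
    rw [aux_sum_eig hH, aux_trace_M]
  have hS2 : ∑ i, hH.eigenvalues i ^ 2 = α ^ 2 * Z + 2 * (1 - α) ^ 2 * m := by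
    rw [aux_sum_sq_eig hH, aux_trace_M_sq]
  have hcard : ∑ _i : V, c = n * c := by
    rw [Finset.sum_const, Finset.card_univ, nsmul_eq_mul, hn]
  have hsum0 : ∑ i, x i = 0 := by
    simp only [hx]
    rw [Finset.sum_sub_distrib, hS1, hcard, hc]
    field_simp
    ring
  have hsumsq : ∑ i, (x i) ^ 2
      = α ^ 2 * Z + 2 * (1 - α) ^ 2 * m - 4 * α ^ 2 * m ^ 2 / n := by
    simp only [hx, sub_sq]
    rw [Finset.sum_add_distrib, Finset.sum_sub_distrib, hS2,
      show (∑ i, 2 * hH.eigenvalues i * c) = 2 * c * ∑ i, hH.eigenvalues i from by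
        rw [Finset.mul_sum]; congr 1; funext i; ring,
      hS1, Finset.sum_const, Finset.card_univ, nsmul_eq_mul, ← hn, hc]
    field_simp
    ring
  have key : 2 * ∑ i, (x i) ^ 2 ≤ (∑ i, |x i|) ^ 2 := aux_abs_sum_sq x hsum0
  have harg : 2 * α ^ 2 * Z + 4 * (1 - α) ^ 2 * m - 8 * α ^ 2 * m ^ 2 / n
      = 2 * ∑ i, (x i) ^ 2 := by
    rw [hsumsq]; ring
  calc Real.sqrt (2 * α ^ 2 * Z + 4 * (1 - α) ^ 2 * m - 8 * α ^ 2 * m ^ 2 / n)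
      = Real.sqrt (2 * ∑ i, (x i) ^ 2) := by rw [harg]
    _ ≤ Real.sqrt ((∑ i, |x i|) ^ 2) := Real.sqrt_le_sqrt key
    _ = ∑ i, |x i| := Real.sqrt_sq (Finset.sum_nonneg fun i _ => abs_nonneg _)
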